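/- Let 0 < P_fa < P_d < 1 and for t ∈ [0,1/2) define π_0(t) = P_fa + t(1−2P_fa), π_1(t) = P_d + t(1−2P_d), and D*(t) = π_0(t) log(π_0(t)/π_1(t)) + (1−π_0(t)) log((1−π_0(t))/(1−π_1(t))). Then D* is continuous, strictly decreasing, and convex on [0,1/2), and D*(t) → 0 as t → 1/2. -/

import Mathlib

open Filter

/-- Bernoulli Kullback–Leibler divergence between success probabilities `a` and `b`. -/
noncomputable def klBern (a b : ℝ) : ℝ :=
  a * Real.log (a / b) + (1 - a) * Real.log ((1 - a) / (1 - b))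

lemma aux_pos (p t : ℝ) (hp : 0 < p) (ht0 : 0 ≤ t) (ht1 : t ≤ 1/2) :
    0 < p + t * (1 - 2 * p) := by
  rcases ht0.eq_or_lt with h | h
  · nlinarith
  · nlinarith [mul_nonneg hp.le (by linarith : (0:ℝ) ≤ 1 - 2*t)]

lemma aux_lt_one (p t : ℝ) (hp : p < 1) (ht0 : 0 ≤ t) (ht1 : t ≤ 1/2) :
    p + t * (1 - 2 * p) < 1 := by
  have := aux_pos (1 - p) t (by linarith) ht0 ht1
  nlinarith

lemma log_sum (x1 x2 y1 y2 l m : ℝ) (hx1 : 0 < x1) (hx2 : 0 < x2)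
    (hy1 : 0 < y1) (hy2 : 0 < y2) (hl : 0 ≤ l) (hm : 0 ≤ m) (hlm : l + m = 1) :
    (l*x1 + m*x2) * Real.log ((l*x1 + m*x2)/(l*y1 + m*y2))
      ≤ l * (x1 * Real.log (x1/y1)) + m * (x2 * Real.log (x2/y2)) := by
  have hY : 0 < l*y1 + m*y2 := by
    rcases hl.eq_or_lt with h | h
    · have hm1 : m = 1 := by linarith
      rw [← h, hm1]; linarith
    · nlinarith [mul_pos h hy1, mul_nonneg hm hy2.le]
  have hw1 : 0 ≤ l*y1/(l*y1+m*y2) := by positivity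
  have hw2 : 0 ≤ m*y2/(l*y1+m*y2) := by positivity
  have hws : l*y1/(l*y1+m*y2) + m*y2/(l*y1+m*y2) = 1 := by field_simp
  have hmem1 : x1/y1 ∈ Set.Ici (0:ℝ) := le_of_lt (div_pos hx1 hy1)
  have hmem2 : x2/y2 ∈ Set.Ici (0:ℝ) := le_of_lt (div_pos hx2 hy2)
  have key := Real.convexOn_mul_log.2 hmem1 hmem2 hw1 hw2 hws
  simp only [smul_eq_mul] at key
  have e : (l*y1/(l*y1+m*y2))*(x1/y1) + (m*y2/(l*y1+m*y2))*(x2/y2)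
      = (l*x1+m*x2)/(l*y1+m*y2) := by field_simp
  rw [e] at key
  have key2 := mul_le_mul_of_nonneg_left key hY.le
  calc (l*x1+m*x2) * Real.log ((l*x1+m*x2)/(l*y1+m*y2))
      = (l*y1+m*y2) * ((l*x1+m*x2)/(l*y1+m*y2) * Real.log ((l*x1+m*x2)/(l*y1+m*y2))) := by
        field_simp
    _ ≤ (l*y1+m*y2) * (l*y1/(l*y1+m*y2)*(x1/y1*Real.log (x1/y1))
          + m*y2/(l*y1+m*y2)*(x2/y2*Real.log (x2/y2))) := key2
    _ = l * (x1 * Real.log (x1/y1)) + m * (x2 * Real.log (x2/y2)) := by field_simp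

lemma klBern_hasDerivAt (p q t : ℝ)
    (ha0 : 0 < p + t*(1-2*p)) (ha1 : p + t*(1-2*p) < 1)
    (hb0 : 0 < q + t*(1-2*q)) (hb1 : q + t*(1-2*q) < 1) :
    HasDerivAt (fun s => klBern (p + s*(1-2*p)) (q + s*(1-2*q)))
      ((1-2*p) * (Real.log (p + t*(1-2*p)) - Real.log (q + t*(1-2*q))
        - Real.log (1 - (p + t*(1-2*p))) + Real.log (1 - (q + t*(1-2*q))))
       + (1-2*q) * (((q + t*(1-2*q)) - (p + t*(1-2*p)))
            / ((q + t*(1-2*q)) * (1 - (q + t*(1-2*q)))))) t := by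
  have ha1' : (1:ℝ) - (p + t*(1-2*p)) ≠ 0 := by linarith
  have hb1' : (1:ℝ) - (q + t*(1-2*q)) ≠ 0 := by linarith
  have hA : HasDerivAt (fun s : ℝ => p + s*(1-2*p)) (1-2*p) t := by
    simpa using ((hasDerivAt_id t).mul_const (1-2*p)).const_add p
  have hB : HasDerivAt (fun s : ℝ => q + s*(1-2*q)) (1-2*q) t := by
    simpa using ((hasDerivAt_id t).mul_const (1-2*q)).const_add q
  have hA1 : HasDerivAt (fun s : ℝ => 1 - (p + s*(1-2*p))) (-(1-2*p)) t := hA.const_sub 1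
  have hB1 : HasDerivAt (fun s : ℝ => 1 - (q + s*(1-2*q))) (-(1-2*q)) t := hB.const_sub 1
  have h1 := (hA.div hB hb0.ne')
  have h2 := h1.log (div_ne_zero ha0.ne' hb0.ne')
  have h3 := hA.mul h2
  have h4 := (hA1.div hB1 hb1')
  have h5 := h4.log (div_ne_zero ha1' hb1')
  have h6 := hA1.mul h5
  have h := h3.add h6
  simp only [klBern]
  convert h using 1
  rotate_right
  simp only [Pi.div_apply]
  rw [Real.log_div ha0.ne' hb0.ne', Real.log_div ha1' hb1']
  have := ha0.ne'
  have := hb0.ne'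
  field_simp
  rw [mul_div_cancel_left₀ _ (by linarith : p + (1-2*p)*t ≠ 0),
    mul_div_cancel_left₀ _ (by linarith : 1 - (p + (1-2*p)*t) ≠ 0)]
  ring
  all_goals rfl

lemma core_neg (a b : ℝ) (ha0 : 0 < a) (hab : a < b) (hb1 : b < 1) :
    (1-2*a) * (Real.log a - Real.log b - Real.log (1-a) + Real.log (1-b))
      + (1-2*b) * ((b-a)/(b*(1-b))) < 0 := by
  have hb0 : 0 < b := lt_trans ha0 hab
  have ha1 : a < 1 := lt_trans hab hb1
  have h1a : 0 < 1 - a := by linarith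
  have h1b : 0 < 1 - b := by linarith
  set r : ℝ := a*(1-b)/(b*(1-a)) with hr_def
  have hr0 : 0 < r := by positivity
  have hr1 : r < 1 := by
    rw [hr_def, div_lt_one (by positivity)]; nlinarith
  have hL : Real.log a - Real.log b - Real.log (1-a) + Real.log (1-b) = Real.log r := by
    rw [hr_def, Real.log_div (by positivity) (by positivity),
        Real.log_mul ha0.ne' h1b.ne', Real.log_mul hb0.ne' h1a.ne']
    ring
  rw [hL]
  rcases le_or_gt 0 (1 - 2*a) with h | h
  · have hlt : Real.log r < r - 1 := Real.log_lt_sub_one_of_pos hr0 hr1.ne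
    have h1 : (1-2*a) * Real.log r ≤ (1-2*a) * (r - 1) :=
      mul_le_mul_of_nonneg_left hlt.le h
    have e : (1-2*a) * (r - 1) + (1-2*b) * ((b-a)/(b*(1-b)))
        = (-(b-a)^2)/(b*(1-a)*(1-b)) := by
      rw [hr_def]; field_simp; ring
    have hneg : (-(b-a)^2)/(b*(1-a)*(1-b)) < 0 := by
      apply div_neg_of_neg_of_pos
      · nlinarith
      · positivity
    nlinarith [h1, e, hneg]
  · have hlt : Real.log r⁻¹ < r⁻¹ - 1 :=
      Real.log_lt_sub_one_of_pos (by positivity) (by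
        simp only [ne_eq, inv_eq_one]; exact hr1.ne)
    rw [Real.log_inv] at hlt
    have hlow : 1 - r⁻¹ < Real.log r := by linarith
    have h1 : (1-2*a) * Real.log r < (1-2*a) * (1 - r⁻¹) :=
      (mul_lt_mul_left_of_neg h).mpr hlow
    have e : (1-2*a) * (1 - r⁻¹) + (1-2*b) * ((b-a)/(b*(1-b)))
        = (-(b-a)^2)/(a*b*(1-b)) := by
      rw [hr_def]; field_simp; ring
    have hneg : (-(b-a)^2)/(a*b*(1-b)) < 0 := by
      apply div_neg_of_neg_of_pos
      · nlinarith
      · positivity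
    nlinarith [h1, e, hneg]

/-- The minimum KL divergence `D*(t) = klBern (P_fa + t(1−2P_fa)) (P_d + t(1−2P_d))`
is continuous, strictly decreasing and convex on `[0, 1/2)`, and tends to `0`
as `t → 1/2`. -/
theorem stmt_11 (Pfa Pd : ℝ)
    (hPfa : 0 < Pfa) (hPfaPd : Pfa < Pd) (hPd : Pd < 1) :
    ContinuousOn
      (fun t : ℝ => klBern (Pfa + t * (1 - 2 * Pfa)) (Pd + t * (1 - 2 * Pd)))
      (Set.Ico 0 (1 / 2)) ∧
    StrictAntiOn
      (fun t : ℝ => klBern (Pfa + t * (1 - 2 * Pfa)) (Pd + t * (1 - 2 * Pd)))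
      (Set.Ico 0 (1 / 2)) ∧
    ConvexOn ℝ (Set.Ico (0 : ℝ) (1 / 2))
      (fun t : ℝ => klBern (Pfa + t * (1 - 2 * Pfa)) (Pd + t * (1 - 2 * Pd))) ∧
    Tendsto (fun t : ℝ => klBern (Pfa + t * (1 - 2 * Pfa)) (Pd + t * (1 - 2 * Pd)))
      (nhdsWithin (1 / 2) (Set.Ico 0 (1 / 2))) (nhds 0) := by
  have hPfa1 : Pfa < 1 := lt_trans hPfaPd hPd
  have hPd0 : 0 < Pd := lt_trans hPfa hPfaPd
  -- derivative at any point of [0, 1/2]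
  have hder : ∀ t : ℝ, 0 ≤ t → t ≤ 1/2 →
      HasDerivAt (fun s : ℝ => klBern (Pfa + s * (1 - 2 * Pfa)) (Pd + s * (1 - 2 * Pd)))
        ((1-2*Pfa) * (Real.log (Pfa + t*(1-2*Pfa)) - Real.log (Pd + t*(1-2*Pd))
          - Real.log (1 - (Pfa + t*(1-2*Pfa))) + Real.log (1 - (Pd + t*(1-2*Pd))))
         + (1-2*Pd) * (((Pd + t*(1-2*Pd)) - (Pfa + t*(1-2*Pfa)))
              / ((Pd + t*(1-2*Pd)) * (1 - (Pd + t*(1-2*Pd)))))) t := by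
    intro t ht0 ht1
    exact klBern_hasDerivAt Pfa Pd t (aux_pos Pfa t hPfa ht0 ht1)
      (aux_lt_one Pfa t hPfa1 ht0 ht1) (aux_pos Pd t hPd0 ht0 ht1)
      (aux_lt_one Pd t hPd ht0 ht1)
  have hcont : ContinuousOn
      (fun t : ℝ => klBern (Pfa + t * (1 - 2 * Pfa)) (Pd + t * (1 - 2 * Pd)))
      (Set.Ico 0 (1 / 2)) :=
    fun t ht => (hder t ht.1 ht.2.le).continuousAt.continuousWithinAt
  refine ⟨hcont, ?_, ?_, ?_⟩
  · -- strictly decreasing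
    apply strictAntiOn_of_deriv_neg (convex_Ico _ _) hcont
    intro x hx
    rw [interior_Ico] at hx
    obtain ⟨hx0, hx1⟩ := hx
    rw [(hder x hx0.le hx1.le).deriv]
    have hA0 := aux_pos Pfa x hPfa hx0.le hx1.le
    have hB1 := aux_lt_one Pd x hPd hx0.le hx1.le
    have hAB : Pfa + x*(1-2*Pfa) < Pd + x*(1-2*Pd) := by nlinarith
    have hcore := core_neg (Pfa + x*(1-2*Pfa)) (Pd + x*(1-2*Pd)) hA0 hAB hB1
    have hx2 : (0:ℝ) < 1 - 2*x := by linarith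
    have e : ∀ L M : ℝ, (1-2*Pfa)*L + (1-2*Pd)*M
        = (1/(1-2*x)) * ((1-2*(Pfa + x*(1-2*Pfa)))*L + (1-2*(Pd + x*(1-2*Pd)))*M) := by
      intro L M
      field_simp
      ring
    rw [e]
    exact mul_neg_of_pos_of_neg (by positivity) hcore
  · -- convex
    refine ⟨convex_Ico _ _, fun x hx y hy l m hl hm hlm => ?_⟩
    simp only [smul_eq_mul]
    have hAx0 := aux_pos Pfa x hPfa hx.1 hx.2.le
    have hAx1 := aux_lt_one Pfa x hPfa1 hx.1 hx.2.le
    have hBx0 := aux_pos Pd x hPd0 hx.1 hx.2.le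
    have hBx1 := aux_lt_one Pd x hPd hx.1 hx.2.le
    have hAy0 := aux_pos Pfa y hPfa hy.1 hy.2.le
    have hAy1 := aux_lt_one Pfa y hPfa1 hy.1 hy.2.le
    have hBy0 := aux_pos Pd y hPd0 hy.1 hy.2.le
    have hBy1 := aux_lt_one Pd y hPd hy.1 hy.2.le
    have eA : Pfa + (l*x + m*y)*(1 - 2*Pfa)
        = l*(Pfa + x*(1-2*Pfa)) + m*(Pfa + y*(1-2*Pfa)) := by
      linear_combination (-Pfa) * hlm
    have eB : Pd + (l*x + m*y)*(1 - 2*Pd)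
        = l*(Pd + x*(1-2*Pd)) + m*(Pd + y*(1-2*Pd)) := by
      linear_combination (-Pd) * hlm
    simp only [klBern]
    rw [eA, eB]
    have e2 : 1 - (l*(Pfa + x*(1-2*Pfa)) + m*(Pfa + y*(1-2*Pfa)))
        = l*(1 - (Pfa + x*(1-2*Pfa))) + m*(1 - (Pfa + y*(1-2*Pfa))) := by
      linear_combination -hlm
    have e3 : 1 - (l*(Pd + x*(1-2*Pd)) + m*(Pd + y*(1-2*Pd)))
        = l*(1 - (Pd + x*(1-2*Pd))) + m*(1 - (Pd + y*(1-2*Pd))) := by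
      linear_combination -hlm
    rw [e2, e3]
    have h1 := log_sum (Pfa + x*(1-2*Pfa)) (Pfa + y*(1-2*Pfa))
      (Pd + x*(1-2*Pd)) (Pd + y*(1-2*Pd)) l m hAx0 hAy0 hBx0 hBy0 hl hm hlm
    have h2 := log_sum (1 - (Pfa + x*(1-2*Pfa))) (1 - (Pfa + y*(1-2*Pfa)))
      (1 - (Pd + x*(1-2*Pd))) (1 - (Pd + y*(1-2*Pd))) l m
      (by linarith) (by linarith) (by linarith) (by linarith) hl hm hlm
    linarith [h1, h2]
  · -- limit at 1/2
    have hd := hder (1/2) (by norm_num) le_rfl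
    have hv : klBern (Pfa + (1/2 : ℝ) * (1 - 2 * Pfa)) (Pd + (1/2 : ℝ) * (1 - 2 * Pd)) = 0 := by
      have e1 : Pfa + (1/2 : ℝ) * (1 - 2 * Pfa) = 1/2 := by ring
      have e2 : Pd + (1/2 : ℝ) * (1 - 2 * Pd) = 1/2 := by ring
      rw [e1, e2, klBern]
      norm_num
    have h : Tendsto (fun t : ℝ => klBern (Pfa + t * (1 - 2 * Pfa)) (Pd + t * (1 - 2 * Pd)))
        (nhdsWithin (1/2) (Set.Ico 0 (1/2)))
        (nhds (klBern (Pfa + (1/2 : ℝ) * (1 - 2 * Pfa)) (Pd + (1/2 : ℝ) * (1 - 2 * Pd)))) :=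
      hd.continuousAt.continuousWithinAt
    rw [hv] at h
    exact h
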